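/- Let α ∈ ℝ[t] be nonzero, let r₁, r₂, r₃ ∈ ℝ[t], and set b = −½(r₁·i + r₂·j + r₃·k) ∈ ℍ[t]. Let A ∈ ℍ[t] be nonzero and suppose the framing condition holds: (α·b′ − α′·b)·(A i Ā) = (A i Ā)·(α·b′ − α′·b). Then the rational curve r = (r₁/α, r₂/α, r₃/α) is a Pythagorean-hodograph curve: there exists σ ∈ RatFunc ℝ such that, in the field of real rational functions, ((r₁/α)′)² + ((r₂/α)′)² + ((r₃/α)′)² = σ², where ′ denotes the derivative of rational functions. -/

import Mathlib

open Polynomial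

noncomputable section

/-- The quaternion unit `i`. -/
def qi : Quaternion ℝ := ⟨0, 1, 0, 0⟩
/-- The quaternion unit `j`. -/
def qj : Quaternion ℝ := ⟨0, 0, 1, 0⟩
/-- The quaternion unit `k`. -/
def qk : Quaternion ℝ := ⟨0, 0, 0, 1⟩

/-- Embedding of real polynomials into quaternion polynomials (scalar coefficients). -/
def toQ : Polynomial ℝ →+* Polynomial (Quaternion ℝ) :=
  mapRingHom (algebraMap ℝ (Quaternion ℝ))

/-- Coefficientwise quaternion conjugation of a quaternion polynomial. -/
def pconj (p : Polynomial (Quaternion ℝ)) : Polynomial (Quaternion ℝ) :=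
  p.sum fun n a => monomial n (star a)

/-- The derivative of a real rational function, extending polynomial differentiation
(defined via the quotient rule on the canonical numerator and denominator). -/
def ratDeriv (f : RatFunc ℝ) : RatFunc ℝ :=
  (algebraMap (Polynomial ℝ) (RatFunc ℝ) (derivative f.num) *
      algebraMap (Polynomial ℝ) (RatFunc ℝ) f.denom -
    algebraMap (Polynomial ℝ) (RatFunc ℝ) f.num *
      algebraMap (Polynomial ℝ) (RatFunc ℝ) (derivative f.denom)) /
  algebraMap (Polynomial ℝ) (RatFunc ℝ) (f.denom ^ 2)

def g : Quaternion ℝ →+* Quaternion (Polynomial ℝ) where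
  toFun a := ⟨C a.re, C a.imI, C a.imJ, C a.imK⟩
  map_one' := by ext : 1; exacts [C_1, C_0, C_0, C_0]
  map_mul' a b := by
    ext : 1
    · refine (congrArg C (Quaternion.re_mul a b)).trans ((Quaternion.re_mul _ _).trans ?_).symm
      simp
    · refine (congrArg C (Quaternion.imI_mul a b)).trans ((Quaternion.imI_mul _ _).trans ?_).symm
      simp
    · refine (congrArg C (Quaternion.imJ_mul a b)).trans ((Quaternion.imJ_mul _ _).trans ?_).symm
      simp
    · refine (congrArg C (Quaternion.imK_mul a b)).trans ((Quaternion.imK_mul _ _).trans ?_).symm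
      simp
  map_zero' := by ext : 1; exacts [C_0, C_0, C_0, C_0]
  map_add' a b := by ext : 1; exacts [C_add, C_add, C_add, C_add]

lemma g_star (a : Quaternion ℝ) : g (star a) = star (g a) := by
  ext : 1
  · show C (star a).re = (star (g a)).re
    rw [Quaternion.re_star, Quaternion.re_star]; rfl
  · show C (star a).imI = (star (g a)).imI
    rw [Quaternion.imI_star, Quaternion.imI_star, map_neg]; rfl
  · show C (star a).imJ = (star (g a)).imJ
    rw [Quaternion.imJ_star, Quaternion.imJ_star, map_neg]; rfl
  · show C (star a).imK = (star (g a)).imK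
    rw [Quaternion.imK_star, Quaternion.imK_star, map_neg]; rfl

@[simp] lemma g_re (a : Quaternion ℝ) : (g a).re = C a.re := rfl
@[simp] lemma g_imI (a : Quaternion ℝ) : (g a).imI = C a.imI := rfl
@[simp] lemma g_imJ (a : Quaternion ℝ) : (g a).imJ = C a.imJ := rfl
@[simp] lemma g_imK (a : Quaternion ℝ) : (g a).imK = C a.imK := rfl
@[simp] lemma qi_re : qi.re = 0 := rfl
@[simp] lemma qi_imI : qi.imI = 1 := rfl
@[simp] lemma qi_imJ : qi.imJ = 0 := rfl
@[simp] lemma qi_imK : qi.imK = 0 := rfl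
@[simp] lemma qj_re : qj.re = 0 := rfl
@[simp] lemma qj_imI : qj.imI = 0 := rfl
@[simp] lemma qj_imJ : qj.imJ = 1 := rfl
@[simp] lemma qj_imK : qj.imK = 0 := rfl
@[simp] lemma qk_re : qk.re = 0 := rfl
@[simp] lemma qk_imI : qk.imI = 0 := rfl
@[simp] lemma qk_imJ : qk.imJ = 0 := rfl
@[simp] lemma qk_imK : qk.imK = 1 := rfl

def Φ : Polynomial (Quaternion ℝ) →+* Quaternion (Polynomial ℝ) :=
  eval₂RingHom' g ((X : Polynomial ℝ) : Quaternion (Polynomial ℝ))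
    (fun a => (Quaternion.coe_commute _ _).symm)

lemma Φ_monomial (n : ℕ) (a : Quaternion ℝ) :
    Φ (monomial n a) = g a * ((X ^ n : Polynomial ℝ) : Quaternion (Polynomial ℝ)) := by
  show eval₂ g _ _ = _
  rw [eval₂_monomial, Quaternion.coe_pow]

lemma Φ_C (q : Quaternion ℝ) : Φ (Polynomial.C q) = g q := by
  show eval₂ g _ _ = _; simp

lemma Φ_toQ (r : Polynomial ℝ) : Φ (toQ r) = (r : Quaternion (Polynomial ℝ)) := by
  show eval₂ g _ (r.map (algebraMap ℝ (Quaternion ℝ))) = _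
  rw [eval₂_map]
  have : (eval₂ ((g : Quaternion ℝ →+* Quaternion (Polynomial ℝ)).comp (algebraMap ℝ (Quaternion ℝ)))
      ((X : Polynomial ℝ) : Quaternion (Polynomial ℝ)) r) =
      algebraMap (Polynomial ℝ) (Quaternion (Polynomial ℝ)) (eval₂ Polynomial.C X r) := by
    rw [Polynomial.hom_eval₂]
    congr 1
    ext x : 1
    ext : 1 <;> simp [Quaternion.algebraMap_def]
  rw [this, eval₂_C_X]
  rfl

lemma pconj_monomial (n : ℕ) (a : Quaternion ℝ) :
    pconj (monomial n a) = monomial n (star a) := by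
  unfold pconj
  rw [Polynomial.sum_monomial_index]
  simp

lemma coeff_pconj (p : Polynomial (Quaternion ℝ)) (n : ℕ) :
    (pconj p).coeff n = star (p.coeff n) := by
  classical
  unfold pconj
  rw [Polynomial.sum_def, finset_sum_coeff]
  simp only [coeff_monomial]
  rw [Finset.sum_eq_single n (fun b _ h => by simp [h]) (fun h => by
    simp [Polynomial.notMem_support_iff.mp h])]
  simp

lemma pconj_add (p q : Polynomial (Quaternion ℝ)) : pconj (p + q) = pconj p + pconj q := by
  refine Polynomial.ext fun n => ?_
  rw [coeff_pconj, coeff_add, coeff_add, coeff_pconj, coeff_pconj, star_add]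

lemma Φ_pconj (p : Polynomial (Quaternion ℝ)) : Φ (pconj p) = star (Φ p) := by
  induction p using Polynomial.induction_on' with
  | add p q hp hq => rw [pconj_add, Φ.map_add, Φ.map_add, hp, hq]; ext : 1 <;> simp <;> abel
  | monomial n a =>
      rw [pconj_monomial, Φ_monomial, Φ_monomial, star_mul, Quaternion.star_coe, ← g_star]
      exact (Quaternion.coe_commutes ((X : Polynomial ℝ) ^ n) (g (star a))).symm

lemma Φ_coeff (p : Polynomial (Quaternion ℝ)) (n : ℕ) :
    (Φ p).re.coeff n = (p.coeff n).re ∧ (Φ p).imI.coeff n = (p.coeff n).imI ∧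
    (Φ p).imJ.coeff n = (p.coeff n).imJ ∧ (Φ p).imK.coeff n = (p.coeff n).imK := by
  induction p using Polynomial.induction_on' with
  | add p q hp hq =>
      obtain ⟨h1,h2,h3,h4⟩ := hp; obtain ⟨h1',h2',h3',h4'⟩ := hq
      rw [Φ.map_add]
      refine ⟨?_, ?_, ?_, ?_⟩ <;>
        simp only [Quaternion.re_add, Quaternion.imI_add, Quaternion.imJ_add, Quaternion.imK_add,
          coeff_add, h1, h2, h3, h4, h1', h2', h3', h4']
  | monomial m a =>
      have hmk : Φ (monomial m a) = (⟨C a.re * X ^ m, C a.imI * X ^ m, C a.imJ * X ^ m,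
          C a.imK * X ^ m⟩ : Quaternion (Polynomial ℝ)) := by
        rw [Φ_monomial, Quaternion.mul_coe_eq_smul]
        apply QuaternionAlgebra.ext <;> exact mul_comm _ _
      have hco : ∀ c : ℝ, (C c * X ^ m).coeff n = if m = n then c else 0 := fun c => by
        rw [C_mul_X_pow_eq_monomial, coeff_monomial]
      rw [hmk, coeff_monomial]
      refine ⟨?_, ?_, ?_, ?_⟩
      · show (C a.re * X ^ m).coeff n = _
        rw [hco]; split_ifs <;> rfl
      · show (C a.imI * X ^ m).coeff n = _
        rw [hco]; split_ifs <;> rfl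
      · show (C a.imJ * X ^ m).coeff n = _
        rw [hco]; split_ifs <;> rfl
      · show (C a.imK * X ^ m).coeff n = _
        rw [hco]; split_ifs <;> rfl

lemma Φ_injective : Function.Injective Φ := by
  intro p q h
  refine Polynomial.ext fun n => ?_
  have hp := Φ_coeff p n
  have hq := Φ_coeff q n
  apply QuaternionAlgebra.ext
  · rw [← hp.1, ← hq.1, h]
  · rw [← hp.2.1, ← hq.2.1, h]
  · rw [← hp.2.2.1, ← hq.2.2.1, h]
  · rw [← hp.2.2.2, ← hq.2.2.2, h]

set_option maxHeartbeats 1000000 in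
lemma ratDeriv_div (p q : Polynomial ℝ) (hq : q ≠ 0) :
    ratDeriv (algebraMap (Polynomial ℝ) (RatFunc ℝ) p / algebraMap (Polynomial ℝ) (RatFunc ℝ) q)
      = algebraMap (Polynomial ℝ) (RatFunc ℝ) (derivative p * q - p * derivative q) /
        algebraMap (Polynomial ℝ) (RatFunc ℝ) (q ^ 2) := by
  set F := algebraMap (Polynomial ℝ) (RatFunc ℝ) with hF
  set f := F p / F q with hf
  have hd : f.denom ≠ 0 := f.denom_ne_zero
  have hFq : F q ≠ 0 := RatFunc.algebraMap_ne_zero hq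
  have hFd : F f.denom ≠ 0 := RatFunc.algebraMap_ne_zero hd
  have hrep : F f.num / F f.denom = F p / F q := by rw [RatFunc.num_div_denom]
  have hcross : f.num * q = p * f.denom := by
    apply RatFunc.algebraMap_injective
    rw [map_mul, map_mul]
    rw [div_eq_div_iff hFd hFq] at hrep
    exact hrep
  have hcross' : derivative f.num * q + f.num * derivative q
      = derivative p * f.denom + p * derivative f.denom := by
    have := congrArg derivative hcross
    simpa [derivative_mul] using this
  show (F (derivative f.num) * F f.denom - F f.num * F (derivative f.denom)) / F (f.denom ^ 2)
      = F (derivative p * q - p * derivative q) / F (q ^ 2)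
  rw [div_eq_div_iff (by simpa using pow_ne_zero 2 hFd) (by simpa using pow_ne_zero 2 hFq)]
  rw [← map_mul, ← map_mul, ← map_sub, ← map_mul, ← map_mul]
  congr 1
  linear_combination (q * f.denom) * hcross'
    - (derivative f.denom * q + derivative q * f.denom) * hcross

lemma sumsq_eq_zero {a b c d : Polynomial ℝ} (h : a^2 + b^2 + c^2 + d^2 = 0) :
    a = 0 ∧ b = 0 ∧ c = 0 ∧ d = 0 := by
  have hev : ∀ t : ℝ, a.eval t = 0 ∧ b.eval t = 0 ∧ c.eval t = 0 ∧ d.eval t = 0 := by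
    intro t
    have ht := congrArg (Polynomial.eval t) h
    simp only [eval_add, eval_pow, eval_zero] at ht
    refine ⟨?_, ?_, ?_, ?_⟩ <;>
      nlinarith [sq_nonneg (a.eval t), sq_nonneg (b.eval t), sq_nonneg (c.eval t),
        sq_nonneg (d.eval t)]
  exact ⟨Polynomial.funext fun t => by simpa using (hev t).1,
    Polynomial.funext fun t => by simpa using (hev t).2.1,
    Polynomial.funext fun t => by simpa using (hev t).2.2.1,
    Polynomial.funext fun t => by simpa using (hev t).2.2.2⟩

lemma toQ_deriv (r : Polynomial ℝ) : derivative (toQ r) = toQ (derivative r) :=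
  derivative_map r (algebraMap ℝ (Quaternion ℝ))

lemma half_zero {a : Polynomial ℝ} (h : a = -a) : a = 0 := by
  have h2 : (2 : Polynomial ℝ) * a = 0 := by linear_combination h
  rcases mul_eq_zero.mp h2 with h' | h'
  · exact absurd h' (by norm_num)
  · exact h'


set_option maxHeartbeats 1000000 in
/-- If `C = (α + εb)A` with `b = −½(r₁i + r₂j + r₃k)` is a framing motion,
i.e. `α·b′ − α′·b` commutes with `A i Ā`, then `r = (r₁/α, r₂/α, r₃/α)` is a
Pythagorean-hodograph curve: the sum of squares of the derivatives of its components is the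
square of a rational function. -/
theorem framing_implies_PH (α r₁ r₂ r₃ : Polynomial ℝ) (hα : α ≠ 0)
    (A : Polynomial (Quaternion ℝ)) (hA : A ≠ 0)
    (b : Polynomial (Quaternion ℝ))
    (hbdef : b = (-(2⁻¹ : ℝ)) •
      (toQ r₁ * Polynomial.C qi + toQ r₂ * Polynomial.C qj + toQ r₃ * Polynomial.C qk))
    (hframe : (toQ α * derivative b - toQ (derivative α) * b) * (A * Polynomial.C qi * pconj A)
        = (A * Polynomial.C qi * pconj A) * (toQ α * derivative b - toQ (derivative α) * b)) :
    ∃ σ : RatFunc ℝ,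
      ratDeriv (algebraMap (Polynomial ℝ) (RatFunc ℝ) r₁ /
          algebraMap (Polynomial ℝ) (RatFunc ℝ) α) ^ 2 +
      ratDeriv (algebraMap (Polynomial ℝ) (RatFunc ℝ) r₂ /
          algebraMap (Polynomial ℝ) (RatFunc ℝ) α) ^ 2 +
      ratDeriv (algebraMap (Polynomial ℝ) (RatFunc ℝ) r₃ /
          algebraMap (Polynomial ℝ) (RatFunc ℝ) α) ^ 2 = σ ^ 2 := by
  classical
  set p₁ : Polynomial ℝ := α * derivative r₁ - derivative α * r₁ with hp₁
  set p₂ : Polynomial ℝ := α * derivative r₂ - derivative α * r₂ with hp₂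
  set p₃ : Polynomial ℝ := α * derivative r₃ - derivative α * r₃ with hp₃
  set B : Polynomial (Quaternion ℝ) :=
    toQ p₁ * Polynomial.C qi + toQ p₂ * Polynomial.C qj + toQ p₃ * Polynomial.C qk with hBdef
  set Q : Polynomial (Quaternion ℝ) := A * Polynomial.C qi * pconj A with hQdef
  -- step 1 : express α b' - α' b
  have hP : toQ α * derivative b - toQ (derivative α) * b = (-(2⁻¹ : ℝ)) • B := by
    rw [hbdef, derivative_smul]
    rw [mul_smul_comm, mul_smul_comm, ← smul_sub]
    congr 1
    simp only [derivative_add, derivative_mul, derivative_C, mul_zero, add_zero, toQ_deriv,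
      hBdef, hp₁, hp₂, hp₃, map_sub, map_mul]
    noncomm_ring
  -- step 2 : B commutes with Q
  have hBQ : B * Q = Q * B := by
    rw [hP] at hframe
    rw [smul_mul_assoc, mul_smul_comm] at hframe
    have := congrArg (fun z => (-2 : ℝ) • z) hframe
    simpa [smul_smul, norm_num] using this
  -- move to Quaternion (Polynomial ℝ)
  set u : Quaternion (Polynomial ℝ) := Φ A with hu
  set y : Quaternion (Polynomial ℝ) := Φ Q with hy
  have hyform : y = u * g qi * star u := by
    rw [hy, hQdef, Φ.map_mul, Φ.map_mul, Φ_C, Φ_pconj]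
  have hqi_star : star qi = -qi := by
    ext <;> simp <;> simp [qi]
  have hystar : star y = -y := by
    rw [hyform, star_mul, star_mul, star_star, ← g_star, hqi_star, map_neg,
      neg_mul (g qi) (star u), mul_neg, mul_assoc]
  have hy0 : y.re = 0 := by
    have h1 : y.re = -y.re := by
      conv_lhs => rw [← Quaternion.re_star y, hystar]
      simp
    exact half_zero h1
  set X3 : Quaternion (Polynomial ℝ) := ⟨0, p₁, p₂, p₃⟩ with hX3
  have hx : Φ B = X3 := by
    rw [hX3]
    rw [hBdef, Φ.map_add, Φ.map_add, Φ.map_mul, Φ.map_mul, Φ.map_mul, Φ_C, Φ_C, Φ_C,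
      Φ_toQ, Φ_toQ, Φ_toQ]
    apply QuaternionAlgebra.ext <;>
      simp [Quaternion.re_mul, Quaternion.imI_mul, Quaternion.imJ_mul,
        Quaternion.imK_mul, Quaternion.re_coe, Quaternion.imI_coe, Quaternion.imJ_coe,
        Quaternion.imK_coe, Quaternion.re_add, Quaternion.imI_add, Quaternion.imJ_add,
        Quaternion.imK_add]
  have hxy : X3 * y = y * X3 := by
    rw [← hx, hy, ← Φ.map_mul, ← Φ.map_mul, hBQ]
  -- components
  have hre : X3.re = 0 := rfl
  have him1 : X3.imI = p₁ := rfl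
  have him2 : X3.imJ = p₂ := rfl
  have him3 : X3.imK = p₃ := rfl
  have c1 : p₂ * y.imK - p₃ * y.imJ = 0 := by
    have e := congrArg QuaternionAlgebra.imI hxy
    simp only [Quaternion.imI_mul, hre, him1, him2, him3, hy0] at e
    apply half_zero
    linear_combination e
  have c2 : p₁ * y.imJ - p₂ * y.imI = 0 := by
    have e := congrArg QuaternionAlgebra.imK hxy
    simp only [Quaternion.imK_mul, hre, him1, him2, him3, hy0] at e
    apply half_zero
    linear_combination e
  have c3 : p₁ * y.imK - p₃ * y.imI = 0 := by
    have e := congrArg QuaternionAlgebra.imJ hxy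
    simp only [Quaternion.imJ_mul, hre, him1, him2, him3, hy0] at e
    apply half_zero
    linear_combination -e
  -- norms
  have hu0 : u ≠ 0 := fun h => hA (Φ_injective (by rw [map_zero, ← hu]; exact h))
  set nu : Polynomial ℝ := Quaternion.normSq u with hnu
  have hnormy : Quaternion.normSq y = nu ^ 2 := by
    rw [hyform, map_mul, map_mul, Quaternion.normSq_star]
    have : Quaternion.normSq (g qi) = 1 := by
      rw [Quaternion.normSq_def']
      simp
    rw [this, hnu]; ring
  have hnu0 : nu ≠ 0 := by
    intro h
    rw [hnu, Quaternion.normSq_def'] at h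
    obtain ⟨h1, h2, h3, h4⟩ := sumsq_eq_zero h
    exact hu0 (QuaternionAlgebra.ext h1 h2 h3 h4)
  set s : Polynomial ℝ := p₁ * y.imI + p₂ * y.imJ + p₃ * y.imK with hs
  have hysum : Quaternion.normSq y = y.imI ^ 2 + y.imJ ^ 2 + y.imK ^ 2 := by
    rw [Quaternion.normSq_def', hy0]; ring
  have key : (p₁ ^ 2 + p₂ ^ 2 + p₃ ^ 2) * nu ^ 2 = s ^ 2 := by
    have hnusq : nu ^ 2 = y.imI ^ 2 + y.imJ ^ 2 + y.imK ^ 2 := by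
      rw [← hnormy, hysum]
    rw [hnusq, hs]
    linear_combination (p₂ * y.imK - p₃ * y.imJ) * c1 + (p₁ * y.imJ - p₂ * y.imI) * c2 +
      (p₁ * y.imK - p₃ * y.imI) * c3
  -- final rational function computation
  set F := algebraMap (Polynomial ℝ) (RatFunc ℝ) with hFdef
  have hFα : F α ≠ 0 := RatFunc.algebraMap_ne_zero hα
  have hFα2 : F (α ^ 2) ≠ 0 := RatFunc.algebraMap_ne_zero (pow_ne_zero 2 hα)
  have hFnu : F nu ≠ 0 := RatFunc.algebraMap_ne_zero hnu0
  have keyF : F (p₁ ^ 2 + p₂ ^ 2 + p₃ ^ 2) * F nu ^ 2 = F s ^ 2 := by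
    have h := congrArg F key
    rw [map_mul, map_pow, map_pow] at h
    exact h
  refine ⟨F s / (F nu * F (α ^ 2)), ?_⟩
  rw [ratDeriv_div r₁ α hα, ratDeriv_div r₂ α hα, ratDeriv_div r₃ α hα]
  rw [show derivative r₁ * α - r₁ * derivative α = p₁ from by rw [hp₁]; ring,
    show derivative r₂ * α - r₂ * derivative α = p₂ from by rw [hp₂]; ring,
    show derivative r₃ * α - r₃ * derivative α = p₃ from by rw [hp₃]; ring]
  have expand : F (p₁ ^ 2 + p₂ ^ 2 + p₃ ^ 2) = F p₁ ^ 2 + F p₂ ^ 2 + F p₃ ^ 2 := by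
    simp [map_add, map_pow]
  have keyF2 : (F p₁ ^ 2 + F p₂ ^ 2 + F p₃ ^ 2) * F nu ^ 2 = F s ^ 2 := by
    rw [← expand]; exact keyF
  rw [← hFdef]
  rw [map_pow] at hFα2 ⊢
  field_simp
  linear_combination keyF2
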